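/- Define g_x := 1 + x(x+1)(2x-5)/6 for natural numbers x. Let t, k be positive integers with t ≥ 1000^5, and let g be a rational number such that g_{t+1} > (999999/1000000)·g and g_k ≤ g - g_t. Then 30k ≤ t. -/
import Mathlib


/-- `gfun x = 1 + x(x+1)(2x-5)/6`, the arithmetic genus of the curve `C_x`. -/
def gfun (x : ℕ) : ℚ := 1 + (x : ℚ) * (x + 1) * (2 * x - 5) / 6

theorem stmt9 (t k : ℕ) (ht : t ≥ 1000 ^ 5) (hk : 0 < k) (g : ℚ)
    (h1 : gfun (t + 1) > (999999 / 1000000) * g)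
    (h2 : gfun k ≤ g - gfun t) :
    30 * k ≤ t := by
  by_contra h
  push_neg at h
  -- cast facts to ℚ
  have hT : (1000^5 : ℚ) ≤ (t : ℚ) := by exact_mod_cast ht
  have hK : ((t : ℚ) + 1) ≤ 30 * (k : ℚ) := by
    have : (t : ℕ) + 1 ≤ 30 * k := h
    exact_mod_cast this
  have hK0 : (1 : ℚ) ≤ (k : ℚ) := by exact_mod_cast hk
  have key : 999999 * (gfun k + gfun t) < 1000000 * gfun (t + 1) := by
    have hg : gfun k + gfun t ≤ g := by linarith
    nlinarith [h1]
  simp only [gfun] at key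
  push_cast at key
  nlinarith [key, sq_nonneg ((t:ℚ) - 30 * k), sq_nonneg ((k:ℚ)), mul_pos (lt_of_lt_of_le (by norm_num : (0:ℚ) < 1000^5) hT) (lt_of_lt_of_le (by norm_num : (0:ℚ) < 1) hK0), sq_nonneg ((t:ℚ) + 1 - 30*k), mul_nonneg (mul_nonneg (sub_nonneg.2 hK) (sub_nonneg.2 hK)) (sub_nonneg.2 hK)]
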